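/- Let (Z, λ) be an equiconnected space. Then for every n ∈ ℕ the map λ_n : Z^n × S_n → Z is continuous (where S_n carries the subspace topology from ℝ^n and Z^n × S_n the product topology). -/

import Mathlib

open Set Function Filter Topology

universe u

/-- An *equiconnecting* map on `Z`: a map `λ : Z × Z × [0,1] → Z`, continuous on
`Z × Z × [0,1]`, with `λ(x,y,0) = x`, `λ(x,y,1) = y` and `λ(x,x,t) = x`. -/
structure IsEquiconnecting {Z : Type*} [TopologicalSpace Z] (lam : Z → Z → ℝ → Z) : Prop where
  continuousOn : ContinuousOn (fun p : Z × Z × ℝ => lam p.1 p.2.1 p.2.2)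
    (Set.univ ×ˢ Set.univ ×ˢ Set.Icc (0 : ℝ) 1)
  map_zero : ∀ x y : Z, lam x y 0 = x
  map_one : ∀ x y : Z, lam x y 1 = y
  map_diag : ∀ x : Z, ∀ t ∈ Set.Icc (0 : ℝ) 1, lam x x t = x

/-- `lambdaIter lam n` is the map `λ_{n+1} : Z^{n+1} × S_{n+1} → Z` from the paper,
defined recursively. -/
noncomputable def lambdaIter {Z : Type*} (lam : Z → Z → ℝ → Z) :
    (n : ℕ) → (Fin (n + 1) → Z) → (Fin (n + 1) → ℝ) → Z
  | 0, x, _ => x 0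
  | n + 1, x, a =>
      if 0 < a 0 + a 1 then
        lambdaIter lam n
          (Fin.cons (lam (x 0) (x 1) (a 1 / (a 0 + a 1))) fun i => x i.succ.succ)
          (Fin.cons (a 0 + a 1) fun i => a i.succ.succ)
      else
        lambdaIter lam n (fun i => x i.succ) fun i => a i.succ

/-- `lambdaIterSet lam A n` is the set `λ^n(A)`:  `λ^0(A) = A` and
`λ^{n+1}(A) = λ(λ^n(A) × A × [0,1])`. -/
def lambdaIterSet {Z : Type*} (lam : Z → Z → ℝ → Z) (A : Set Z) : ℕ → Set Z
  | 0 => A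
  | n + 1 => (fun p : Z × Z × ℝ => lam p.1 p.2.1 p.2.2) ''
      (lambdaIterSet lam A n ×ˢ A ×ˢ Set.Icc (0 : ℝ) 1)

/-- `λ^∞(A) = ⋃_{n ≥ 1} λ^n(A)`. -/
def lambdaInftySet {Z : Type*} (lam : Z → Z → ℝ → Z) (A : Set Z) : Set Z :=
  ⋃ n : ℕ, lambdaIterSet lam A (n + 1)

/-- An equiconnected space `(Z, λ)` is locally convex if every point has arbitrarily small
neighborhoods `V` with `λ^∞(V)` inside a given neighborhood. -/
def IsLocallyConvexEquiconnected {Z : Type*} [TopologicalSpace Z] (lam : Z → Z → ℝ → Z) :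
    Prop :=
  ∀ z : Z, ∀ U ∈ nhds z, ∃ V ∈ nhds z, lambdaInftySet lam V ⊆ U

/-- A map is Baire-one if it is the pointwise limit of a sequence of continuous maps. -/
def BaireOne {Y Z : Type*} [TopologicalSpace Y] [TopologicalSpace Z] (g : Y → Z) : Prop :=
  ∃ h : ℕ → Y → Z, (∀ n, Continuous (h n)) ∧
    ∀ y, Filter.Tendsto (fun n => h n y) Filter.atTop (nhds (g y))

/-- A locally finite partition of unity on `X`: continuous `[0,1]`-valued functions whose
supports (closures of the sets where they are nonzero) form a locally finite family and whose
pointwise sum is `1`. -/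
def IsLocFinPartitionOfUnity {I X : Type*} [TopologicalSpace X] (φ : I → X → ℝ) : Prop :=
  (∀ i, Continuous (φ i)) ∧ (∀ i x, φ i x ∈ Set.Icc (0 : ℝ) 1) ∧
    (LocallyFinite fun i => closure (Function.support (φ i))) ∧ ∀ x, ∑ᶠ i, φ i x = 1

/-- A strong PP-space: for every dense `D ⊆ X` there are a sequence of locally finite
partitions of unity and families of points of `D` such that points attached to the supports
containing `x` converge to `x` uniformly in the index, in the sense of condition (3). -/
def IsStrongPPSpace (X : Type*) [TopologicalSpace X] : Prop :=
  ∀ D : Set X, Dense D →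
    ∃ (I : ℕ → Type u) (φ : ∀ n, I n → X → ℝ) (p : ∀ n, I n → X),
      (∀ n, IsLocFinPartitionOfUnity (φ n)) ∧ (∀ n i, p n i ∈ D) ∧
      ∀ x : X, ∀ U ∈ nhds x, ∃ n₀ : ℕ, ∀ n ≥ n₀, ∀ i : I n,
        x ∈ closure (Function.support (φ n i)) → p n i ∈ U

/-- A zero set: the preimage of `{0}` under a continuous function `X → [0,1]`. -/
def IsZeroSet {X : Type*} [TopologicalSpace X] (A : Set X) : Prop :=
  ∃ f : X → ℝ, Continuous f ∧ (∀ x, f x ∈ Set.Icc (0 : ℝ) 1) ∧ A = f ⁻¹' {0}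

/-- A cozero set: the preimage of `(0,1]` under a continuous function `X → [0,1]`. -/
def IsCozeroSet {X : Type*} [TopologicalSpace X] (A : Set X) : Prop :=
  ∃ f : X → ℝ, Continuous f ∧ (∀ x, f x ∈ Set.Icc (0 : ℝ) 1) ∧ A = f ⁻¹' Set.Ioc (0 : ℝ) 1

/-- A functionally ambiguous set: simultaneously a countable union of zero sets and a
countable intersection of cozero sets. -/
def IsFunctionallyAmbiguous {X : Type*} [TopologicalSpace X] (A : Set X) : Prop :=
  (∃ F : ℕ → Set X, (∀ n, IsZeroSet (F n)) ∧ A = ⋃ n, F n) ∧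
    ∃ B : ℕ → Set X, (∀ n, IsCozeroSet (B n)) ∧ A = ⋂ n, B n

/-- A discrete family of sets: every point has a neighborhood meeting at most one member. -/
def IsDiscreteFamily {I X : Type*} [TopologicalSpace X] (A : I → Set X) : Prop :=
  ∀ x : X, ∃ U ∈ nhds x, {i : I | (U ∩ A i).Nonempty}.Subsingleton

/-- Weakly collectionwise normal: every discrete family of zero sets can be separated by a
discrete family of cozero sets. -/
def WeaklyCollectionwiseNormal (X : Type*) [TopologicalSpace X] : Prop :=
  ∀ (S : Type u) (F : S → Set X), (∀ s, IsZeroSet (F s)) → IsDiscreteFamily F →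
    ∃ U : S → Set X, (∀ s, IsCozeroSet (U s)) ∧ IsDiscreteFamily U ∧ ∀ s, F s ⊆ U s

/-- A contracting structure on `Z`: a continuous `γ : Z × [0,1] → Z` with `γ(z,0) = z` and
`γ(z,1) = z₀`. -/
structure IsContracting {Z : Type*} [TopologicalSpace Z] (γ : Z → ℝ → Z) (z₀ : Z) :
    Prop where
  continuousOn : ContinuousOn (fun p : Z × ℝ => γ p.1 p.2) (Set.univ ×ˢ Set.Icc (0 : ℝ) 1)
  map_zero : ∀ z : Z, γ z 0 = z
  map_one : ∀ z : Z, γ z 1 = z₀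


section Aux

private lemma lambdaIter_zero_head {Z : Type*} (lam : Z → Z → ℝ → Z)
    (h1 : ∀ x y : Z, lam x y 1 = y) (n : ℕ) (x : Fin (n + 2) → Z) (a : Fin (n + 2) → ℝ)
    (ha : a 0 = 0) :
    lambdaIter lam (n + 1) x a = lambdaIter lam n (fun i => x i.succ) fun i => a i.succ := by
  rw [lambdaIter]
  by_cases h : 0 < a 0 + a 1
  · rw [if_pos h]
    have ha1 : a 1 ≠ 0 := by rw [ha, zero_add] at h; exact ne_of_gt h
    have hd : a 1 / (a 0 + a 1) = 1 := by rw [ha, zero_add, div_self ha1]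
    rw [hd, h1]
    congr 1
    · funext i
      induction i using Fin.cases with
      | zero => simp
      | succ j => simp
    · funext i
      induction i using Fin.cases with
      | zero => simp [ha]
      | succ j => simp
  · rw [if_neg h]

private lemma continuousWithinAt_finCons {X α : Type*} [TopologicalSpace X] [TopologicalSpace α]
    {n : ℕ} {f : X → α} {g : X → Fin n → α} {s : Set X} {x : X}
    (hf : ContinuousWithinAt f s x) (hg : ContinuousWithinAt g s x) :
    ContinuousWithinAt (fun q => (Fin.cons (f q) (g q) : Fin (n + 1) → α)) s x := by
  rw [continuousWithinAt_pi]
  intro i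
  induction i using Fin.cases with
  | zero => simpa using hf
  | succ j => simp only [Fin.cons_succ]; exact (continuousWithinAt_pi.mp hg j)

private lemma tube_lemma_within {P Z : Type*} [TopologicalSpace P] [TopologicalSpace Z]
    {g : ℝ → P → Z} {S : Set P} {p₀ : P} {U : Set Z} (hU : IsOpen U) (hp₀ : p₀ ∈ S)
    (hcont : ContinuousOn (fun r : ℝ × P => g r.1 r.2) (Set.Icc (0:ℝ) 1 ×ˢ S))
    (hval : ∀ t ∈ Set.Icc (0:ℝ) 1, g t p₀ ∈ U) :
    ∃ W ∈ 𝓝[S] p₀, ∀ q ∈ W, ∀ t ∈ Set.Icc (0:ℝ) 1, g t q ∈ U := by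
  have H : ∀ t ∈ Set.Icc (0:ℝ) 1, ∃ (O : Set ℝ) (B : Set P), IsOpen O ∧ t ∈ O ∧
      B ∈ 𝓝[S] p₀ ∧ ∀ s ∈ O ∩ Set.Icc (0:ℝ) 1, ∀ q ∈ B, g s q ∈ U := by
    intro t ht
    have hc : ContinuousWithinAt (fun r : ℝ × P => g r.1 r.2) (Set.Icc (0:ℝ) 1 ×ˢ S) (t, p₀) :=
      hcont (t, p₀) ⟨ht, hp₀⟩
    have hmem : (fun r : ℝ × P => g r.1 r.2) ⁻¹' U ∈ 𝓝[Set.Icc (0:ℝ) 1 ×ˢ S] (t, p₀) :=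
      hc (hU.mem_nhds (hval t ht))
    rw [nhdsWithin_prod_eq, Filter.mem_prod_iff] at hmem
    obtain ⟨A, hA, B, hB, hAB⟩ := hmem
    rw [mem_nhdsWithin] at hA
    obtain ⟨O, hO, htO, hOA⟩ := hA
    exact ⟨O, B, hO, htO, hB, fun s hs q hq => hAB (Set.mk_mem_prod (hOA hs) hq)⟩
  choose! O B hO htO hB hOB using H
  obtain ⟨T, hTsub, hTcov⟩ := isCompact_Icc.elim_nhds_subcover O
    (fun t ht => (hO t ht).mem_nhds (htO t ht))
  refine ⟨⋂ t ∈ T, B t, (Filter.biInter_finset_mem T).mpr (fun t ht => hB t (hTsub t ht)), ?_⟩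
  intro q hq t ht
  obtain ⟨s, hsT, hts⟩ := Set.mem_iUnion₂.mp (hTcov ht)
  exact hOB s (hTsub s hsT) t ⟨hts, ht⟩ q (Set.mem_iInter₂.mp hq s hsT)

private lemma cons_tail_mem_stdSimplex {n : ℕ} {b : Fin (n + 2) → ℝ}
    (hb : b ∈ stdSimplex ℝ (Fin (n + 2))) :
    (Fin.cons (b 0 + b 1) fun i => b i.succ.succ) ∈ stdSimplex ℝ (Fin (n + 1)) := by
  obtain ⟨h1, h2⟩ := hb
  rw [Fin.sum_univ_succ, Fin.sum_univ_succ] at h2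
  constructor
  · intro i
    induction i using Fin.cases with
    | zero => simpa using add_nonneg (h1 0) (h1 1)
    | succ j => simpa using h1 j.succ.succ
  · rw [Fin.sum_univ_succ]
    simp only [Fin.cons_zero, Fin.cons_succ]
    have : b (Fin.succ 0) = b 1 := by norm_num
    rw [this] at h2
    linarith

private lemma tail_mem_stdSimplex {n : ℕ} {b : Fin (n + 2) → ℝ}
    (hb : b ∈ stdSimplex ℝ (Fin (n + 2))) (hb0 : b 0 = 0) :
    (fun i : Fin (n + 1) => b i.succ) ∈ stdSimplex ℝ (Fin (n + 1)) := by
  obtain ⟨h1, h2⟩ := hb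
  rw [Fin.sum_univ_succ, hb0, zero_add] at h2
  exact ⟨fun i => h1 i.succ, h2⟩

end Aux

/-- In an equiconnected space `(Z, λ)`, every map `λ_n : Z^n × S_n → Z` is
continuous (on `Z^n × S_n`, with `S_n` the standard simplex in `ℝ^n`).
(`lambdaIter lam n` is `λ_{n+1}`, so this covers all `n ≥ 1`.) -/
theorem lambdaIter_continuousOn {Z : Type*} [TopologicalSpace Z] (lam : Z → Z → ℝ → Z)
    (hlam : IsEquiconnecting lam) (n : ℕ) :
    ContinuousOn (fun p : (Fin (n + 1) → Z) × (Fin (n + 1) → ℝ) => lambdaIter lam n p.1 p.2)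
      (Set.univ ×ˢ stdSimplex ℝ (Fin (n + 1))) := by
  induction n with
  | zero =>
    have he : (fun p : (Fin 1 → Z) × (Fin 1 → ℝ) => lambdaIter lam 0 p.1 p.2)
        = fun p => p.1 0 := by
      funext p; rw [lambdaIter]
    rw [he]
    exact ((continuous_apply (0 : Fin 1)).comp continuous_fst).continuousOn
  | succ n IH =>
    set P := (Fin (n + 2) → Z) × (Fin (n + 2) → ℝ)
    set S := (Set.univ ×ˢ stdSimplex ℝ (Fin (n + 2)) : Set P) with hSdef
    intro p₀ hp₀
    have ha : p₀.2 ∈ stdSimplex ℝ (Fin (n + 2)) := hp₀.2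
    have hnn : ∀ q : P, q ∈ S → ∀ i, 0 ≤ q.2 i := fun q hq i => hq.2.1 i
    set O : Set P := {q : P | 0 < q.2 0 + q.2 1} with hOdef
    have hcontsum : Continuous fun q : P => q.2 0 + q.2 1 :=
      ((continuous_apply 0).comp continuous_snd).add ((continuous_apply 1).comp continuous_snd)
    have hOopen : IsOpen O := isOpen_lt continuous_const hcontsum
    by_cases hpos : 0 < p₀.2 0 + p₀.2 1
    · -- Case 1 : the head weights at p₀ have positive sum
      have hmemO : O ∈ 𝓝 p₀ := hOopen.mem_nhds hpos
      have hp₀SO : p₀ ∈ S ∩ O := ⟨hp₀, hpos⟩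
      rw [ContinuousWithinAt, nhdsWithin_restrict' S hmemO]
      have hdivW : ContinuousWithinAt (fun q : P => q.2 1 / (q.2 0 + q.2 1)) (S ∩ O) p₀ := by
        have h1 : ContinuousAt (fun q : P => q.2 1) p₀ :=
          ((continuous_apply 1).comp continuous_snd).continuousAt
        have h2 : ContinuousAt (fun q : P => q.2 0 + q.2 1) p₀ := hcontsum.continuousAt
        exact (h1.div h2 (ne_of_gt hpos)).continuousWithinAt
      have hinner : ContinuousWithinAt
          (fun q : P => ((q.1 0 : Z), ((q.1 1 : Z), q.2 1 / (q.2 0 + q.2 1)))) (S ∩ O) p₀ := by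
        refine ContinuousWithinAt.prodMk ?_ (ContinuousWithinAt.prodMk ?_ hdivW)
        · exact ((continuous_apply (0 : Fin (n + 2))).comp continuous_fst).continuousWithinAt
        · exact ((continuous_apply (1 : Fin (n + 2))).comp continuous_fst).continuousWithinAt
      have hmaps2 : Set.MapsTo
          (fun q : P => ((q.1 0 : Z), ((q.1 1 : Z), q.2 1 / (q.2 0 + q.2 1))))
          (S ∩ O) (Set.univ ×ˢ Set.univ ×ˢ Set.Icc (0 : ℝ) 1) := by
        intro q hq
        refine ⟨Set.mem_univ _, Set.mem_univ _, ?_, ?_⟩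
        · exact div_nonneg (hnn q hq.1 1) (le_of_lt hq.2)
        · exact (div_le_one hq.2).mpr (le_add_of_nonneg_left (hnn q hq.1 0))
      have hlamW : ContinuousWithinAt
          (fun q : P => lam (q.1 0) (q.1 1) (q.2 1 / (q.2 0 + q.2 1))) (S ∩ O) p₀ := by
        have houter : ContinuousWithinAt (fun p : Z × Z × ℝ => lam p.1 p.2.1 p.2.2)
            (Set.univ ×ˢ Set.univ ×ˢ Set.Icc (0 : ℝ) 1)
            ((fun q : P => ((q.1 0 : Z), ((q.1 1 : Z), q.2 1 / (q.2 0 + q.2 1)))) p₀) :=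
          hlam.continuousOn _ (hmaps2 hp₀SO)
        have := ContinuousWithinAt.comp (f := fun q : P =>
            ((q.1 0 : Z), ((q.1 1 : Z), q.2 1 / (q.2 0 + q.2 1)))) houter hinner hmaps2
        simpa [Function.comp_def] using this
      have htail1 : ContinuousWithinAt (fun q : P => fun i : Fin n => q.1 i.succ.succ)
          (S ∩ O) p₀ :=
        (continuous_pi fun i => (continuous_apply _).comp continuous_fst).continuousWithinAt
      have htail2 : ContinuousWithinAt (fun q : P => fun i : Fin n => q.2 i.succ.succ)
          (S ∩ O) p₀ :=
        (continuous_pi fun i => (continuous_apply _).comp continuous_snd).continuousWithinAt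
      have hΨ : ContinuousWithinAt (fun q : P =>
          ((Fin.cons (lam (q.1 0) (q.1 1) (q.2 1 / (q.2 0 + q.2 1)))
              fun i => q.1 i.succ.succ : Fin (n + 1) → Z),
           (Fin.cons (q.2 0 + q.2 1) fun i => q.2 i.succ.succ : Fin (n + 1) → ℝ)))
          (S ∩ O) p₀ :=
        ContinuousWithinAt.prodMk (continuousWithinAt_finCons hlamW htail1)
          (continuousWithinAt_finCons hcontsum.continuousWithinAt htail2)
      have hmapsΨ : Set.MapsTo (fun q : P =>
          ((Fin.cons (lam (q.1 0) (q.1 1) (q.2 1 / (q.2 0 + q.2 1)))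
              fun i => q.1 i.succ.succ : Fin (n + 1) → Z),
           (Fin.cons (q.2 0 + q.2 1) fun i => q.2 i.succ.succ : Fin (n + 1) → ℝ)))
          (S ∩ O) (Set.univ ×ˢ stdSimplex ℝ (Fin (n + 1))) :=
        fun q hq => ⟨Set.mem_univ _, cons_tail_mem_stdSimplex hq.1.2⟩
      have houterIH : ContinuousWithinAt
          (fun p : (Fin (n + 1) → Z) × (Fin (n + 1) → ℝ) => lambdaIter lam n p.1 p.2)
          (Set.univ ×ˢ stdSimplex ℝ (Fin (n + 1)))
          ((fun q : P =>
            ((Fin.cons (lam (q.1 0) (q.1 1) (q.2 1 / (q.2 0 + q.2 1)))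
                fun i => q.1 i.succ.succ : Fin (n + 1) → Z),
             (Fin.cons (q.2 0 + q.2 1) fun i => q.2 i.succ.succ : Fin (n + 1) → ℝ))) p₀) :=
        IH _ (hmapsΨ hp₀SO)
      have hcomp := ContinuousWithinAt.comp (f := fun q : P =>
            ((Fin.cons (lam (q.1 0) (q.1 1) (q.2 1 / (q.2 0 + q.2 1)))
                fun i => q.1 i.succ.succ : Fin (n + 1) → Z),
             (Fin.cons (q.2 0 + q.2 1) fun i => q.2 i.succ.succ : Fin (n + 1) → ℝ)))
          houterIH hΨ hmapsΨ
      have hcomp' : ContinuousWithinAt (fun q : P =>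
          lambdaIter lam n
            (Fin.cons (lam (q.1 0) (q.1 1) (q.2 1 / (q.2 0 + q.2 1)))
              fun i => q.1 i.succ.succ)
            (Fin.cons (q.2 0 + q.2 1) fun i => q.2 i.succ.succ)) (S ∩ O) p₀ := by
        simpa [Function.comp_def] using hcomp
      have heq : ∀ q ∈ S ∩ O, lambdaIter lam (n + 1) q.1 q.2 =
          lambdaIter lam n
            (Fin.cons (lam (q.1 0) (q.1 1) (q.2 1 / (q.2 0 + q.2 1)))
              fun i => q.1 i.succ.succ)
            (Fin.cons (q.2 0 + q.2 1) fun i => q.2 i.succ.succ) := by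
        intro q hq
        have hq2 : 0 < q.2 0 + q.2 1 := hq.2
        rw [lambdaIter, if_pos hq2]
      exact hcomp'.congr heq (heq p₀ hp₀SO)
    · -- Case 2 : both head weights vanish at p₀
      have ha0 : p₀.2 0 = 0 := by
        have := hnn p₀ hp₀ 0; have := hnn p₀ hp₀ 1; push_neg at hpos; linarith
      have ha1 : p₀.2 1 = 0 := by
        have := hnn p₀ hp₀ 0; have := hnn p₀ hp₀ 1; push_neg at hpos; linarith
      rcases n with - | m
      · exfalso
        have := ha.2
        rw [Fin.sum_univ_two] at this
        rw [ha0, ha1] at this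
        norm_num at this
      · rw [ContinuousWithinAt]
        rw [(nhds_basis_opens (lambdaIter lam (m + 1 + 1) p₀.1 p₀.2)).tendsto_right_iff]
        rintro U ⟨hvU, hUopen⟩
        rw [Filter.eventually_iff,
          show (𝓝[S] p₀) = 𝓝[S ∩ O ∪ S ∩ Oᶜ] p₀ by rw [Set.inter_union_compl],
          nhdsWithin_union, Filter.mem_sup]
        -- the common limit value
        have hv : lambdaIter lam (m + 1 + 1) p₀.1 p₀.2 =
            lambdaIter lam m (fun i => p₀.1 i.succ.succ) fun i => p₀.2 i.succ.succ := by
          rw [lambdaIter, if_neg hpos,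
            lambdaIter_zero_head lam hlam.map_one m _ _ (by simpa using ha1)]
        constructor
        · -- on S ∩ O : use the tube lemma
          set g : ℝ → P → Z := fun t q =>
            lambdaIter lam (m + 1)
              (Fin.cons (lam (q.1 0) (q.1 1) t) fun i => q.1 i.succ.succ)
              (Fin.cons (q.2 0 + q.2 1) fun i => q.2 i.succ.succ) with hgdef
          have hgcont : ContinuousOn (fun r : ℝ × P => g r.1 r.2)
              (Set.Icc (0:ℝ) 1 ×ˢ S) := by
            intro r hr
            have hinner : ContinuousWithinAt
                (fun r : ℝ × P => ((r.2.1 0 : Z), ((r.2.1 1 : Z), r.1)))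
                (Set.Icc (0:ℝ) 1 ×ˢ S) r := by
              refine ContinuousWithinAt.prodMk ?_ (ContinuousWithinAt.prodMk ?_
                continuous_fst.continuousWithinAt)
              · exact ((continuous_apply (0 : Fin (m + 3))).comp
                  (continuous_fst.comp continuous_snd)).continuousWithinAt
              · exact ((continuous_apply (1 : Fin (m + 3))).comp
                  (continuous_fst.comp continuous_snd)).continuousWithinAt
            have hmaps2 : Set.MapsTo (fun r : ℝ × P => ((r.2.1 0 : Z), ((r.2.1 1 : Z), r.1)))
                (Set.Icc (0:ℝ) 1 ×ˢ S) (Set.univ ×ˢ Set.univ ×ˢ Set.Icc (0 : ℝ) 1) :=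
              fun r hr => ⟨Set.mem_univ _, Set.mem_univ _, hr.1⟩
            have hlamW : ContinuousWithinAt (fun r : ℝ × P => lam (r.2.1 0) (r.2.1 1) r.1)
                (Set.Icc (0:ℝ) 1 ×ˢ S) r := by
              have houter : ContinuousWithinAt (fun p : Z × Z × ℝ => lam p.1 p.2.1 p.2.2)
                  (Set.univ ×ˢ Set.univ ×ˢ Set.Icc (0 : ℝ) 1)
                  ((fun r : ℝ × P => ((r.2.1 0 : Z), ((r.2.1 1 : Z), r.1))) r) :=
                hlam.continuousOn _ (hmaps2 hr)
              have := ContinuousWithinAt.comp (f := fun r : ℝ × P =>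
                  ((r.2.1 0 : Z), ((r.2.1 1 : Z), r.1))) houter hinner hmaps2
              simpa [Function.comp_def] using this
            have htail1 : ContinuousWithinAt
                (fun r : ℝ × P => fun i : Fin (m + 1) => r.2.1 i.succ.succ)
                (Set.Icc (0:ℝ) 1 ×ˢ S) r :=
              (continuous_pi fun i => (continuous_apply _).comp
                (continuous_fst.comp continuous_snd)).continuousWithinAt
            have htail2 : ContinuousWithinAt
                (fun r : ℝ × P => fun i : Fin (m + 1) => r.2.2 i.succ.succ)
                (Set.Icc (0:ℝ) 1 ×ˢ S) r :=
              (continuous_pi fun i => (continuous_apply _).comp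
                (continuous_snd.comp continuous_snd)).continuousWithinAt
            have hsum : ContinuousWithinAt (fun r : ℝ × P => r.2.2 0 + r.2.2 1)
                (Set.Icc (0:ℝ) 1 ×ˢ S) r :=
              (((continuous_apply 0).comp (continuous_snd.comp continuous_snd)).add
                ((continuous_apply 1).comp (continuous_snd.comp continuous_snd))).continuousWithinAt
            have hΦ : ContinuousWithinAt (fun r : ℝ × P =>
                ((Fin.cons (lam (r.2.1 0) (r.2.1 1) r.1)
                    fun i => r.2.1 i.succ.succ : Fin (m + 2) → Z),
                 (Fin.cons (r.2.2 0 + r.2.2 1)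
                    fun i => r.2.2 i.succ.succ : Fin (m + 2) → ℝ)))
                (Set.Icc (0:ℝ) 1 ×ˢ S) r :=
              ContinuousWithinAt.prodMk (continuousWithinAt_finCons hlamW htail1)
                (continuousWithinAt_finCons hsum htail2)
            have hmapsΦ : Set.MapsTo (fun r : ℝ × P =>
                ((Fin.cons (lam (r.2.1 0) (r.2.1 1) r.1)
                    fun i => r.2.1 i.succ.succ : Fin (m + 2) → Z),
                 (Fin.cons (r.2.2 0 + r.2.2 1)
                    fun i => r.2.2 i.succ.succ : Fin (m + 2) → ℝ)))
                (Set.Icc (0:ℝ) 1 ×ˢ S) (Set.univ ×ˢ stdSimplex ℝ (Fin (m + 2))) :=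
              fun r hr => ⟨Set.mem_univ _, cons_tail_mem_stdSimplex hr.2.2⟩
            have houter2 : ContinuousWithinAt
                (fun p : (Fin (m + 2) → Z) × (Fin (m + 2) → ℝ) =>
                  lambdaIter lam (m + 1) p.1 p.2)
                (Set.univ ×ˢ stdSimplex ℝ (Fin (m + 2)))
                ((fun r : ℝ × P =>
                  ((Fin.cons (lam (r.2.1 0) (r.2.1 1) r.1)
                      fun i => r.2.1 i.succ.succ : Fin (m + 2) → Z),
                   (Fin.cons (r.2.2 0 + r.2.2 1)
                      fun i => r.2.2 i.succ.succ : Fin (m + 2) → ℝ))) r) :=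
              IH _ (hmapsΦ hr)
            have := ContinuousWithinAt.comp (f := fun r : ℝ × P =>
                  ((Fin.cons (lam (r.2.1 0) (r.2.1 1) r.1)
                      fun i => r.2.1 i.succ.succ : Fin (m + 2) → Z),
                   (Fin.cons (r.2.2 0 + r.2.2 1)
                      fun i => r.2.2 i.succ.succ : Fin (m + 2) → ℝ)))
              houter2 hΦ hmapsΦ
            simpa [hgdef, Function.comp_def] using this
          have hgval : ∀ t ∈ Set.Icc (0:ℝ) 1,
              g t p₀ ∈ U := by
            intro t _
            have hz : (Fin.cons (p₀.2 0 + p₀.2 1)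
                (fun i => p₀.2 i.succ.succ) : Fin (m + 2) → ℝ) 0 = 0 := by
              simp [ha0, ha1]
            have := lambdaIter_zero_head lam hlam.map_one m
              (Fin.cons (lam (p₀.1 0) (p₀.1 1) t) fun i => p₀.1 i.succ.succ)
              (Fin.cons (p₀.2 0 + p₀.2 1) fun i => p₀.2 i.succ.succ) hz
            rw [hgdef]
            simp only [this, Fin.cons_succ]
            rw [← hv] at *
            simpa [Fin.cons_succ] using hvU
          obtain ⟨W, hWmem, hW⟩ := tube_lemma_within hUopen hp₀ hgcont hgval
          have hWmem' : W ∈ 𝓝[S ∩ O] p₀ := nhdsWithin_mono p₀ Set.inter_subset_left hWmem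
          refine Filter.mem_of_superset (Filter.inter_mem hWmem' self_mem_nhdsWithin) ?_
          rintro q ⟨hqW, hqS, hqO⟩
          have hqOlt : 0 < q.2 0 + q.2 1 := hqO
          have htIcc : q.2 1 / (q.2 0 + q.2 1) ∈ Set.Icc (0:ℝ) 1 :=
            ⟨div_nonneg (hnn q hqS 1) (le_of_lt hqOlt),
             (div_le_one hqOlt).mpr (le_add_of_nonneg_left (hnn q hqS 0))⟩
          have : lambdaIter lam (m + 1 + 1) q.1 q.2 = g (q.2 1 / (q.2 0 + q.2 1)) q := by
            have hqO' : 0 < q.2 0 + q.2 1 := hqO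
            rw [lambdaIter, if_pos hqO']
          show lambdaIter lam (m + 1 + 1) q.1 q.2 ∈ U
          rw [this]
          exact hW q hqW _ htIcc
        · -- on S ∩ Oᶜ : both head weights vanish, use IH directly
          have htails : ContinuousWithinAt (fun q : P =>
              ((fun i : Fin (m + 2) => q.1 i.succ), (fun i : Fin (m + 2) => q.2 i.succ)))
              (S ∩ Oᶜ) p₀ :=
            (Continuous.prodMk
              (continuous_pi fun i => (continuous_apply _).comp continuous_fst)
              (continuous_pi fun i => (continuous_apply _).comp
                continuous_snd)).continuousWithinAt
          have hzeroes : ∀ q : P, q ∈ S ∩ Oᶜ → q.2 0 = 0 := by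
            rintro q ⟨hqS, hqO⟩
            have h0 := hnn q hqS 0
            have h1 := hnn q hqS 1
            have : ¬ 0 < q.2 0 + q.2 1 := hqO
            push_neg at this
            linarith
          have hmapsT : Set.MapsTo (fun q : P =>
              ((fun i : Fin (m + 2) => q.1 i.succ), (fun i : Fin (m + 2) => q.2 i.succ)))
              (S ∩ Oᶜ) (Set.univ ×ˢ stdSimplex ℝ (Fin (m + 2))) := by
            intro q hq
            exact ⟨Set.mem_univ _, tail_mem_stdSimplex hq.1.2 (hzeroes q hq)⟩
          have hptmem : ((fun i : Fin (m + 2) => p₀.1 i.succ),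
              (fun i : Fin (m + 2) => p₀.2 i.succ)) ∈
              (Set.univ ×ˢ stdSimplex ℝ (Fin (m + 2))) :=
            ⟨Set.mem_univ _, tail_mem_stdSimplex ha ha0⟩
          have houterIH : ContinuousWithinAt
              (fun p : (Fin (m + 2) → Z) × (Fin (m + 2) → ℝ) =>
                lambdaIter lam (m + 1) p.1 p.2)
              (Set.univ ×ˢ stdSimplex ℝ (Fin (m + 2)))
              ((fun q : P => ((fun i : Fin (m + 2) => q.1 i.succ),
                (fun i : Fin (m + 2) => q.2 i.succ))) p₀) :=
            IH _ hptmem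
          have hcomp := ContinuousWithinAt.comp (f := fun q : P =>
              ((fun i : Fin (m + 2) => q.1 i.succ), (fun i : Fin (m + 2) => q.2 i.succ)))
            houterIH htails hmapsT
          have hcomp' : ContinuousWithinAt (fun q : P =>
              lambdaIter lam (m + 1) (fun i => q.1 i.succ) fun i => q.2 i.succ)
              (S ∩ Oᶜ) p₀ := by
            simpa [Function.comp_def] using hcomp
          have hveq : lambdaIter lam (m + 1 + 1) p₀.1 p₀.2 =
              lambdaIter lam (m + 1) (fun i => p₀.1 i.succ) fun i => p₀.2 i.succ := by
            rw [lambdaIter, if_neg hpos]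
          have hpre : (fun q : P =>
              lambdaIter lam (m + 1) (fun i => q.1 i.succ) fun i => q.2 i.succ) ⁻¹' U ∈
              𝓝[S ∩ Oᶜ] p₀ := by
            apply hcomp'
            show U ∈ 𝓝 (lambdaIter lam (m + 1) (fun i => p₀.1 i.succ) fun i => p₀.2 i.succ)
            rw [← hveq]
            exact hUopen.mem_nhds hvU
          refine Filter.mem_of_superset (Filter.inter_mem hpre self_mem_nhdsWithin) ?_
          rintro q ⟨hqpre, hqS, hqO⟩
          show lambdaIter lam (m + 1 + 1) q.1 q.2 ∈ U
          have : lambdaIter lam (m + 1 + 1) q.1 q.2 =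
              lambdaIter lam (m + 1) (fun i => q.1 i.succ) fun i => q.2 i.succ := by
            have hqO' : ¬ 0 < q.2 0 + q.2 1 := hqO
            rw [lambdaIter, if_neg hqO']
          rw [this]
          exact hqpre
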